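/- Along any closed-loop run under the supervisor Ŝ, the rank never reaches α: for every s ∈ ℒ(Ŝ/G), ξ(δ_P(x_{P,0}, s)) < α, given ξ(x_{P,0}) < α. -/

import Mathlib

open scoped Classical

/-- Extended (partial) transition function on finite event sequences. -/
def runOf {X E : Type} (δ : X → E → Option X) : List E → X → Option X
  | [], x => some x
  | e :: s, x => (δ x e).bind (runOf δ s)

/-- A string consisting only of unobservable events. -/
def UOString {E : Type} (uo : E → Prop) (s : List E) : Prop := ∀ e ∈ s, uo e

/-- Natural projection erasing unobservable events. -/
noncomputable def proj {E : Type} (uo : E → Prop) (s : List E) : List E :=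
  s.filter (fun e => decide (¬ uo e))

/-- Legal control pattern: events with some strictly rank-decreasing occurrence
within the unobservable reach of `x`. -/
def gammaLeg {X E : Type} (δ : X → E → Option X) (uo : E → Prop)
    (ξ : X → ℕ) (x : X) : Set E :=
  {σ | ∃ s y z, UOString uo s ∧ runOf δ s x = some y ∧ δ y σ = some z ∧ ξ z < ξ y}

/-- Unobservable reach of `x` under control pattern `γ`. -/
def UR {X E : Type} (δ : X → E → Option X) (uo : E → Prop)
    (γ : Set E) (x : X) : Set X :=
  {x' | ∃ u : List E, (∀ e ∈ u, uo e ∧ e ∈ γ) ∧ runOf δ u x = some x'}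

/-- Membership in the next-state estimate `NS(s_o)` after observation `s_o`. -/
inductive NSmem {X E : Type} (δ : X → E → Option X) (uo : E → Prop)
    (x0 : X) : List E → X → Prop
  | init : NSmem δ uo x0 [] x0
  | step {so : List E} {x x' x'' : X} {σ : E} :
      NSmem δ uo x0 so x →
      x' ∈ UR δ uo Set.univ x →
      ¬ uo σ → δ x' σ = some x'' → NSmem δ uo x0 (so ++ [σ]) x''

/-- Joint legal control pattern of the state estimate. -/
def gammaLegNS {X E : Type} (δ : X → E → Option X) (uo : E → Prop) (ξ : X → ℕ)
    (x0 : X) (so : List E) : Set E :=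
  {σ | ∃ x, NSmem δ uo x0 so x ∧ σ ∈ gammaLeg δ uo ξ x}

/-- Permissive control pattern at state `x` and step `k`. -/
def gammaPer {X E : Type} (δ : X → E → Option X) (uo : E → Prop) (ξ : X → ℕ)
    (η : ℕ → ℝ) (x : X) (k : ℕ) : Set E :=
  {σ | ∀ s z, UOString uo s → runOf δ (s ++ [σ]) x = some z → (ξ z : ℝ) < η k}

/-- Joint permissive control pattern of the state estimate. -/
def gammaPerNS {X E : Type} (δ : X → E → Option X) (uo : E → Prop) (ξ : X → ℕ)
    (η : ℕ → ℝ) (x0 : X) (so : List E) (k : ℕ) : Set E :=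
  {σ | ∀ x, NSmem δ uo x0 so x → σ ∈ gammaPer δ uo ξ η x k}

/-- The on-line supervisor's control action after observation `so`. -/
def supAct {X E : Type} (δ : X → E → Option X) (uo : E → Prop) (ξ : X → ℕ)
    (η : ℕ → ℝ) (x0 : X) (so : List E) : Set E :=
  gammaLegNS δ uo ξ x0 so ∪ gammaPerNS δ uo ξ η x0 so so.length

/-- `ξ̂(x)`: min over controllable successors' ranks if no uncontrollable event
is defined at `x`, else max over uncontrollable successors' ranks. -/
noncomputable def hatXi {X E : Type} (δ : X → E → Option X) (uc : E → Prop)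
    (ξ : X → ℕ) (x : X) : ℕ :=
  if ∀ e, uc e → δ x e = none then
    sInf {n | ∃ e y, ¬ uc e ∧ δ x e = some y ∧ ξ y = n}
  else
    sSup {n | ∃ e y, uc e ∧ δ x e = some y ∧ ξ y = n}

/-- The update operator `up_α(r, x)`. -/
noncomputable def upA {X : Type} (α : ℕ) (F : Set X) (x : X) (r : ℕ) : ℕ :=
  if x ∉ F ∧ r < α then r + 1 else r

/-- Observability of the product automaton w.r.t. `ξ` and the projection. -/
def Observable {X E : Type} (δ : X → E → Option X) (uo : E → Prop)
    (ξ : X → ℕ) (x0 : X) : Prop :=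
  ∀ s s' : List E, ∀ σ : E,
    (runOf δ s x0).isSome → (runOf δ s' x0).isSome →
    proj uo s = proj uo s' →
    (∃ y z, runOf δ s x0 = some y ∧ δ y σ = some z ∧ ξ z < ξ y) →
    (runOf δ (s' ++ [σ]) x0).isSome →
    ∃ y z, runOf δ s' x0 = some y ∧ δ y σ = some z ∧ ξ z < ξ y

/-- The list of states visited along a run. -/
def visited {X E : Type} (δ : X → E → Option X) : List E → X → Option (List X)
  | [], x => some [x]
  | e :: s, x => (δ x e).bind fun y => (visited δ s y).map (fun l => x :: l)

/-- Closed-loop language of the DES under the on-line supervisor. -/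
inductive CL {X E : Type} (δ : X → E → Option X) (uo : E → Prop) (ξ : X → ℕ)
    (η : ℕ → ℝ) (x0 : X) : List E → Prop
  | nil : CL δ uo ξ η x0 []
  | snoc {s : List E} {σ : E} :
      CL δ uo ξ η x0 s →
      (runOf δ (s ++ [σ]) x0).isSome →
      σ ∈ supAct δ uo ξ η x0 (proj uo s) →
      CL δ uo ξ η x0 (s ++ [σ])

lemma runOf_append {X E : Type} (δ : X → E → Option X) (s t : List E) (x : X) :
    runOf δ (s ++ t) x = (runOf δ s x).bind (runOf δ t) := by
  induction s generalizing x with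
  | nil => simp [runOf]
  | cons e s ih =>
    simp only [List.cons_append, runOf]
    cases δ x e with
    | none => simp
    | some y => simp [ih]

lemma proj_append {E : Type} (uo : E → Prop) (s t : List E) :
    proj uo (s ++ t) = proj uo s ++ proj uo t := by
  simp [proj, List.filter_append]

lemma proj_uo {E : Type} {uo : E → Prop} {u : List E} (h : UOString uo u) :
    proj uo u = [] := by
  simp only [proj, List.filter_eq_nil_iff]
  intro e he
  simp [h e he]

lemma proj_single_obs {E : Type} {uo : E → Prop} {σ : E} (h : ¬ uo σ) :
    proj uo [σ] = [σ] := by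
  simp [proj, h]

lemma eta_le_eta0 {η : ℕ → ℝ} (hmono : ∀ k, η (k + 1) ≤ η k) (k : ℕ) :
    η k ≤ η 0 := by
  induction k with
  | zero => exact le_refl _
  | succ n ih => exact le_trans (hmono n) ih

/-- Every state in the estimate is reachable by a string with the right projection. -/
lemma NS_reach {X E : Type} {δ : X → E → Option X} {uo : E → Prop} {x0 : X}
    {so : List E} {x : X} (h : NSmem δ uo x0 so x) :
    ∃ t, runOf δ t x0 = some x ∧ proj uo t = so := by
  induction h with
  | init => exact ⟨[], rfl, rfl⟩
  | @step so x x' x'' σ _ hUR hobsσ hδ ih =>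
    obtain ⟨t, ht, htp⟩ := ih
    obtain ⟨u, hu, hru⟩ := hUR
    refine ⟨t ++ u ++ [σ], ?_, ?_⟩
    · rw [runOf_append, runOf_append, ht]
      simp only [Option.bind_some, hru, Option.bind_some]
      simp [runOf, hδ]
    · rw [proj_append, proj_append, htp, proj_uo (fun e he => (hu e he).1),
        proj_single_obs hobsσ]
      simp

/-- The actual state reached decomposes through the estimate via an
unobservable suffix. -/
lemma state_decomp {X E : Type} (δ : X → E → Option X) (uo : E → Prop) (x0 : X) :
    ∀ s : List E, ∀ y : X, runOf δ s x0 = some y →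
      ∃ x u, NSmem δ uo x0 (proj uo s) x ∧ UOString uo u ∧ runOf δ u x = some y := by
  intro s
  induction s using List.reverseRecOn with
  | nil =>
    intro y hy
    simp only [runOf, Option.some.injEq] at hy
    subst hy
    exact ⟨x0, [], NSmem.init, fun e he => absurd he List.not_mem_nil, rfl⟩
  | append_singleton s e ih =>
    intro y hy
    rw [runOf_append] at hy
    obtain ⟨w, hw, hwe⟩ := Option.bind_eq_some_iff.mp hy
    simp only [runOf] at hwe
    obtain ⟨y', hy', hy'2⟩ := Option.bind_eq_some_iff.mp hwe
    simp only [runOf, Option.some.injEq] at hy'2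
    subst hy'2
    obtain ⟨x, u, hNS, hu, hru⟩ := ih w hw
    by_cases he : uo e
    · refine ⟨x, u ++ [e], ?_, ?_, ?_⟩
      · have h1 : proj uo [e] = [] := proj_uo (fun e' he' => by
          simp only [List.mem_singleton] at he'; subst he'; exact he)
        rw [proj_append, h1]
        simpa using hNS
      · intro e' he'
        rcases List.mem_append.mp he' with h' | h'
        · exact hu e' h'
        · simp only [List.mem_singleton] at h'; subst h'; exact he
      · rw [runOf_append, hru]
        simp [runOf, hy']
    · refine ⟨y', [], ?_, fun e' he' => absurd he' List.not_mem_nil, rfl⟩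
      rw [proj_append, proj_single_obs he]
      exact NSmem.step hNS ⟨u, fun e' he' => ⟨hu e' he', trivial⟩, hru⟩ he hy'

/-- along any closed-loop string the rank never reaches `α`. -/
theorem stmt15 {X E : Type} (δ : X → E → Option X) (uo : E → Prop)
    (x0 : X) (ξ : X → ℕ) (α : ℕ) (η : ℕ → ℝ)
    (hctrl : ξ x0 < α)
    (hη0 : η 0 ≤ (α : ℝ))
    (hmono : ∀ k, η (k + 1) ≤ η k)
    (hobs : Observable δ uo ξ x0) :
    ∀ s : List E, CL δ uo ξ η x0 s →
      ∀ y : X, runOf δ s x0 = some y → ξ y < α := by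
  intro s hs
  induction hs with
  | nil =>
    intro y hy
    simp only [runOf, Option.some.injEq] at hy
    subst hy
    exact hctrl
  | @snoc s σ hCL hsome hsup ih =>
    intro z hz
    rw [runOf_append] at hz
    obtain ⟨y, hy, hyz⟩ := Option.bind_eq_some_iff.mp hz
    simp only [runOf] at hyz
    obtain ⟨z', hz', hz'2⟩ := Option.bind_eq_some_iff.mp hyz
    simp only [runOf, Option.some.injEq] at hz'2
    subst hz'2
    rcases hsup with hleg | hper
    · -- legal case: use observability
      obtain ⟨x, hNS, w, y', z'', hw, hrw, hδ, hlt⟩ := hleg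
      obtain ⟨t, ht, htp⟩ := NS_reach hNS
      have hrun2 : runOf δ (t ++ w) x0 = some y' := by
        rw [runOf_append, ht]; simpa using hrw
      have hprojeq : proj uo (t ++ w) = proj uo s := by
        rw [proj_append, htp, proj_uo hw]; simp
      have hmain := hobs (t ++ w) s σ (by rw [hrun2]; rfl) (by rw [hy]; rfl)
        hprojeq ⟨y', z'', hrun2, hδ, hlt⟩ (by
          rw [runOf_append, hy]
          simp [runOf, hz'])
      obtain ⟨y2, z2, hy2, hδ2, hlt2⟩ := hmain
      rw [hy] at hy2
      injection hy2 with hy2; subst hy2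
      rw [hz'] at hδ2
      injection hδ2 with hδ2; subst hδ2
      exact lt_trans hlt2 (ih y hy)
    · -- permissive case
      obtain ⟨x, u, hNS, hu, hru⟩ := state_decomp δ uo x0 s y hy
      have h := hper x hNS u z' hu (by
        rw [runOf_append, hru]
        simp [runOf, hz'])
      have : (ξ z' : ℝ) < (α : ℝ) :=
        lt_of_lt_of_le h (le_trans (eta_le_eta0 hmono _) hη0)
      exact_mod_cast this
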